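/- In the braid group B_q, for 2 ≤ r < q, the identity (Π_{r-1})⁻¹ · Π_{q-1}^r · Π_{q-2}^{r-1} ⋯ Π_{q-r+1}^2 · Π_{q-r} = Π_{q-1}^r · Π_{q-2}^{r-1} ⋯ Π_{q-r+1}^2 · Π_{q-r} · (Π_{q-1}^{q-r+1})⁻¹ holds. -/

import Mathlib

/-- Defining relations for the braid group `B n` on `n` strands, with Artin
generators `σ_1, …, σ_{n-1}`.  Generators with index `0` or `≥ n` are killed,
so the presented group is exactly `B n`. -/
def braidRels (n : ℕ) : Set (FreeGroup ℕ) :=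
  {r | (∃ i, 1 ≤ i ∧ i + 2 ≤ n ∧
        r = FreeGroup.of i * FreeGroup.of (i + 1) * FreeGroup.of i *
            (FreeGroup.of (i + 1) * FreeGroup.of i * FreeGroup.of (i + 1))⁻¹) ∨
      (∃ i j, 1 ≤ i ∧ i + 2 ≤ j ∧ j + 1 ≤ n ∧
        r = FreeGroup.of i * FreeGroup.of j * (FreeGroup.of j * FreeGroup.of i)⁻¹) ∨
      (∃ i, (i = 0 ∨ n ≤ i) ∧ r = FreeGroup.of i)}

/-- The braid group on `n` strands. -/
def BraidGroup (n : ℕ) : Type := PresentedGroup (braidRels n)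

instance (n : ℕ) : Group (BraidGroup n) := by unfold BraidGroup; infer_instance

/-- The Artin generator `σ_i` of `B n`. -/
def sigma (n i : ℕ) : BraidGroup n := PresentedGroup.of i

/-- `Π_s^l = σ_l σ_{l+1} ⋯ σ_s`  (the identity when `s < l`). -/
def Pi' (n l s : ℕ) : BraidGroup n := ((List.range' l (s + 1 - l)).map (sigma n)).prod

/-- `Δ_s^l = Π_s^l Π_{s-1}^l ⋯ Π_l^l`  (the identity when `s < l`). -/
def Delta (n l s : ℕ) : BraidGroup n :=
  ((List.range (s + 1 - l)).map (fun k => Pi' n l (s - k))).prod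

lemma rel_one {n : ℕ} {r : FreeGroup ℕ} (h : r ∈ braidRels n) :
    (PresentedGroup.mk (braidRels n) r : BraidGroup n) = 1 :=
  (QuotientGroup.eq_one_iff r).mpr (Subgroup.subset_normalClosure h)

lemma sigma_braid {n i : ℕ} (h1 : 1 ≤ i) (h2 : i + 2 ≤ n) :
    sigma n i * sigma n (i+1) * sigma n i = sigma n (i+1) * sigma n i * sigma n (i+1) := by
  have h := rel_one (n := n) (r := FreeGroup.of i * FreeGroup.of (i + 1) * FreeGroup.of i *
            (FreeGroup.of (i + 1) * FreeGroup.of i * FreeGroup.of (i + 1))⁻¹)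
    (Or.inl ⟨i, h1, h2, rfl⟩)
  simp only [map_mul, map_inv] at h
  have := mul_eq_one_iff_eq_inv.mp h
  rw [inv_inv] at this
  exact this

lemma sigma_comm {n i j : ℕ} (h1 : 1 ≤ i) (h2 : i + 2 ≤ j) (h3 : j + 1 ≤ n) :
    sigma n i * sigma n j = sigma n j * sigma n i := by
  have h := rel_one (n := n) (r := FreeGroup.of i * FreeGroup.of j *
      (FreeGroup.of j * FreeGroup.of i)⁻¹) (Or.inr (Or.inl ⟨i, j, h1, h2, h3, rfl⟩))
  simp only [map_mul, map_inv] at h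
  have := mul_eq_one_iff_eq_inv.mp h
  rw [inv_inv] at this
  exact this

lemma Pi'_nil {n l s : ℕ} (h : s < l) : Pi' n l s = 1 := by
  unfold Pi'
  rw [show s + 1 - l = 0 by omega]
  simp

lemma Pi'_single (n s : ℕ) : Pi' n s s = sigma n s := by
  unfold Pi'
  rw [show s + 1 - s = 1 by omega]
  simp

lemma Pi'_concat {n l s t : ℕ} (hl : l ≤ s + 1) (hs : s ≤ t) :
    Pi' n l s * Pi' n (s+1) t = Pi' n l t := by
  unfold Pi'
  rw [← List.prod_append, ← List.map_append]
  congr 1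
  rw [show t + 1 - l = (s + 1 - l) + (t + 1 - (s+1)) by omega, ← List.range'_append_1,
    show l + (s + 1 - l) = s + 1 by omega]

lemma Pi'_last {n l s : ℕ} (hl : 1 ≤ l) (h : l ≤ s) : Pi' n l s = Pi' n l (s-1) * sigma n s := by
  rcases Nat.eq_or_lt_of_le h with rfl | hlt
  · rw [Pi'_single, Pi'_nil (show l - 1 < l by omega), one_mul]
  · rw [← Pi'_single n s, show s = (s-1)+1 by omega]
    rw [show s - 1 + 1 - 1 = s - 1 by omega]
    exact (Pi'_concat (by omega) (by omega)).symm

lemma sigma_comm_Pi' {n i l s : ℕ} (h1 : 1 ≤ i) (h2 : i + 2 ≤ l) (h3 : s + 1 ≤ n) :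
    Commute (sigma n i) (Pi' n l s) := by
  apply Commute.list_prod_right
  intro x hx
  simp only [List.mem_map, List.mem_range'] at hx
  obtain ⟨j, ⟨hj1, hj2⟩, rfl⟩ := hx
  exact sigma_comm h1 (by omega) (by omega)

lemma Pi'_comm_sigma {n j l s : ℕ} (h1 : 1 ≤ l) (h2 : s + 2 ≤ j) (h3 : j + 1 ≤ n) :
    Commute (Pi' n l s) (sigma n j) := by
  apply Commute.list_prod_left
  intro x hx
  simp only [List.mem_map, List.mem_range'] at hx
  obtain ⟨i, ⟨hi1, hi2⟩, rfl⟩ := hx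
  exact sigma_comm (by omega) (by omega) h3

lemma shift {n i : ℕ} (h1 : 1 ≤ i) (h2 : i + 2 ≤ n) :
    Pi' n 1 (n-1) * sigma n i = sigma n (i+1) * Pi' n 1 (n-1) := by
  have hsplit : Pi' n 1 (i+1) * Pi' n (i+2) (n-1) = Pi' n 1 (n-1) :=
    Pi'_concat (by omega) (by omega)
  have hc : Commute (sigma n i) (Pi' n (i+2) (n-1)) :=
    sigma_comm_Pi' h1 le_rfl (by omega)
  have key : Pi' n 1 (i+1) * sigma n i = sigma n (i+1) * Pi' n 1 (i+1) := by
    have e1 : Pi' n 1 (i+1) = Pi' n 1 (i-1) * sigma n i * sigma n (i+1) := by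
      rw [Pi'_last (le_refl 1) (by omega), show i + 1 - 1 = i by omega,
        Pi'_last (le_refl 1) (by omega)]
    have hc2 : Commute (Pi' n 1 (i-1)) (sigma n (i+1)) :=
      Pi'_comm_sigma le_rfl (by omega) (by omega)
    calc Pi' n 1 (i+1) * sigma n i
        = Pi' n 1 (i-1) * (sigma n i * sigma n (i+1) * sigma n i) := by
          rw [e1]; group
      _ = Pi' n 1 (i-1) * (sigma n (i+1) * sigma n i * sigma n (i+1)) := by
          rw [sigma_braid h1 h2]
      _ = sigma n (i+1) * Pi' n 1 (i+1) := by
          rw [e1, show Pi' n 1 (i-1) * (sigma n (i+1) * sigma n i * sigma n (i+1)) =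
            (Pi' n 1 (i-1) * sigma n (i+1)) * (sigma n i * sigma n (i+1)) by group, hc2.eq]
          group
  calc Pi' n 1 (n-1) * sigma n i
      = Pi' n 1 (i+1) * (Pi' n (i+2) (n-1) * sigma n i) := by rw [← hsplit]; group
    _ = Pi' n 1 (i+1) * sigma n i * Pi' n (i+2) (n-1) := by rw [← hc.eq]; group
    _ = sigma n (i+1) * Pi' n 1 (n-1) := by rw [key, ← hsplit]; group

lemma shiftPi {n l s : ℕ} (h1 : 1 ≤ l) (hs : s + 1 ≤ n - 1) :
    Pi' n 1 (n-1) * Pi' n l s = Pi' n (l+1) (s+1) * Pi' n 1 (n-1) := by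
  induction s with
  | zero =>
    rw [Pi'_nil (n:=n) (l:=l) (s:=0) (by omega),
      Pi'_nil (n:=n) (l:=l+1) (s:=0+1) (by omega), mul_one, one_mul]
  | succ s ih =>
    by_cases hls : s + 1 < l
    · rw [Pi'_nil (n:=n) (l:=l) (s:=s+1) hls,
        Pi'_nil (n:=n) (l:=l+1) (s:=s+1+1) (by omega), mul_one, one_mul]
    · push_neg at hls
      rw [Pi'_last (n:=n) (l:=l) (s:=s+1) h1 (by omega),
        Pi'_last (n:=n) (l:=l+1) (s:=s+1+1) (by omega) (by omega)]
      simp only [Nat.add_sub_cancel]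
      calc Pi' n 1 (n-1) * (Pi' n l s * sigma n (s+1))
          = (Pi' n 1 (n-1) * Pi' n l s) * sigma n (s+1) := by group
        _ = Pi' n (l+1) (s+1) * (Pi' n 1 (n-1) * sigma n (s+1)) := by
            rw [ih (by omega)]; group
        _ = Pi' n (l+1) (s+1) * sigma n (s+2) * Pi' n 1 (n-1) := by
            rw [shift (by omega) (by omega)]; group

lemma shiftProd {n : ℕ} (f g : ℕ → ℕ) (L : List ℕ)
    (hf : ∀ j ∈ L, 1 ≤ f j) (hg : ∀ j ∈ L, g j + 1 ≤ n - 1) :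
    Pi' n 1 (n-1) * (L.map (fun j => Pi' n (f j) (g j))).prod =
      (L.map (fun j => Pi' n (f j + 1) (g j + 1))).prod * Pi' n 1 (n-1) := by
  induction L with
  | nil => simp
  | cons a t ih =>
    simp only [List.map_cons, List.prod_cons, ← mul_assoc]
    rw [shiftPi (hf a (by simp)) (hg a (by simp)), mul_assoc,
      ih (fun j hj => hf j (by simp [hj])) (fun j hj => hg j (by simp [hj])), ← mul_assoc]

theorem stmt7 (q r : ℕ) (hr : 2 ≤ r) (hrq : r < q) :
    (Pi' q 1 (r - 1))⁻¹ * ((List.range r).map (fun j => Pi' q (r - j) (q - 1 - j))).prod =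
      ((List.range r).map (fun j => Pi' q (r - j) (q - 1 - j))).prod * (Pi' q (q - r + 1) (q - 1))⁻¹ := by
  set F : ℕ → BraidGroup q := fun j => Pi' q (r - j) (q - 1 - j) with hF
  have hsplit : (List.range r).map F = F 0 :: (List.range' 1 (r-1)).map F := by
    conv_lhs => rw [List.range_eq_range', show r = (r-1)+1 by omega, List.range'_succ]
    simp
  have hsplit2 : (List.range r).map F = (List.range (r-1)).map F ++ [F (r-1)] := by
    conv_lhs => rw [show r = (r-1)+1 by omega, List.range_succ]
    simp
  have hlist : (List.range' 1 (r-1)).map (fun j => Pi' q (r - j + 1) (q - 1 - j + 1)) =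
      (List.range (r-1)).map F := by
    rw [List.range'_eq_map_range, List.map_map]
    apply List.map_congr_left
    intro j hj
    simp only [List.mem_range] at hj
    show Pi' q (r - (1+j) + 1) (q - 1 - (1+j) + 1) = Pi' q (r - j) (q - 1 - j)
    congr 1 <;> omega
  have htail : Pi' q 1 (q-1) * ((List.range' 1 (r-1)).map F).prod =
      ((List.range (r-1)).map F).prod * Pi' q 1 (q-1) := by
    have h := shiftProd (n := q) (fun j => r - j) (fun j => q - 1 - j) (List.range' 1 (r-1))
      (by intro j hj; simp only [List.mem_range'] at hj; show 1 ≤ r - j; omega)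
      (by intro j hj; simp only [List.mem_range'] at hj; show q - 1 - j + 1 ≤ q - 1; omega)
    rw [hF, h, hlist]
  have hhead : Pi' q 1 (r-1) * F 0 = Pi' q 1 (q-1) := by
    have h := Pi'_concat (n := q) (l := 1) (s := r-1) (t := q-1) (by omega) (by omega)
    rw [show r - 1 + 1 = r by omega] at h
    rw [show F 0 = Pi' q r (q-1) by simp [hF], h]
  have hend : Pi' q 1 (q-1) = F (r-1) * Pi' q (q-r+1) (q-1) := by
    have h := Pi'_concat (n := q) (l := 1) (s := q-r) (t := q-1) (by omega) (by omega)
    rw [show F (r-1) = Pi' q 1 (q-r) by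
      simp only [hF]; congr 1 <;> omega]
    rw [show q - r + 1 = q - r + 1 from rfl, h]
  have key : Pi' q 1 (r-1) * ((List.range r).map F).prod =
      ((List.range r).map F).prod * Pi' q (q - r + 1) (q - 1) := by
    calc Pi' q 1 (r-1) * ((List.range r).map F).prod
        = (Pi' q 1 (r-1) * F 0) * ((List.range' 1 (r-1)).map F).prod := by
          rw [hsplit, List.prod_cons]; group
      _ = Pi' q 1 (q-1) * ((List.range' 1 (r-1)).map F).prod := by rw [hhead]
      _ = ((List.range (r-1)).map F).prod * Pi' q 1 (q-1) := htail
      _ = ((List.range (r-1)).map F).prod * (F (r-1) * Pi' q (q-r+1) (q-1)) := by rw [← hend]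
      _ = ((List.range r).map F).prod * Pi' q (q-r+1) (q-1) := by
          rw [hsplit2, List.prod_append, List.prod_cons, List.prod_nil]; group
  rw [inv_mul_eq_iff_eq_mul, ← mul_assoc, key]
  group
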